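/- Let D ⊆ H be a nonempty open connected set, let f : D → ℂ be polar-analytic on D, and suppose (r₀,θ₀) ∈ D is an accumulation point of distinct zeros of f, i.e. there exists a sequence (r_n,θ_n) ∈ D of zeros of f with (r_n,θ_n) ≠ (r₀,θ₀) for all n and (r_n,θ_n) → (r₀,θ₀). Then (Θ₀^k f)(r₀,θ₀) = 0 for every integer k ≥ 0. -/

import Mathlib

open MeasureTheory Filter Complex ENNReal

noncomputable section

/-- The right half-plane `H = {(r,θ) : r > 0}`. -/
def polarHalfPlane : Set (ℝ × ℝ) := {p : ℝ × ℝ | 0 < p.1}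

/-- `f` has polar derivative `L` at `p`, the limit being taken within `D`. -/
def HasPolarDerivAt (f : ℝ × ℝ → ℂ) (D : Set (ℝ × ℝ)) (p : ℝ × ℝ) (L : ℂ) : Prop :=
  Tendsto (fun q : ℝ × ℝ =>
      (f q - f p) /
        ((q.1 : ℂ) * Complex.exp (Complex.I * (q.2 : ℂ)) -
         (p.1 : ℂ) * Complex.exp (Complex.I * (p.2 : ℂ))))
    (nhdsWithin p (D \ {p})) (nhds L)

/-- `f` is polar-analytic on `D`. -/
def PolarAnalyticOn (f : ℝ × ℝ → ℂ) (D : Set (ℝ × ℝ)) : Prop :=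
  ∀ p ∈ D, ∃ L : ℂ, HasPolarDerivAt f D p L

/-- The polar Mellin derivative `Θ_c f = r ∂f/∂r + c f`. -/
def mellinPolarDeriv (c : ℝ) (f : ℝ × ℝ → ℂ) : ℝ × ℝ → ℂ :=
  fun p => (p.1 : ℂ) * deriv (fun r : ℝ => f (r, p.2)) p.1 + (c : ℂ) * f p

/-- The `X_c^p` norm. -/
def XNorm (c : ℝ) (p : ℝ≥0∞) (φ : ℝ → ℂ) : ℝ≥0∞ :=
  if p = ⊤ then ⨆ r : {r : ℝ // 0 < r}, ENNReal.ofReal ((r : ℝ) ^ c * ‖φ r‖)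
  else (∫⁻ r in Set.Ioi (0 : ℝ),
          ENNReal.ofReal ((r ^ c * ‖φ r‖) ^ p.toReal / r)) ^ (1 / p.toReal)

/-- Membership in the Mellin–Bernstein space `B^p_{c,T}`. -/
def MemMellinBernstein (p : ℝ≥0∞) (c T : ℝ) (f : ℝ × ℝ → ℂ) : Prop :=
  PolarAnalyticOn f polarHalfPlane ∧
  XNorm c p (fun r => f (r, 0)) < ⊤ ∧
  ∃ C : ℝ, 0 < C ∧ ∀ r θ : ℝ, 0 < r → r ^ c * ‖f (r, θ)‖ ≤ C * Real.exp (T * |θ|)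

/-- The polar disk `E((r₀,θ₀),ρ)`. -/
def polarDisk (p : ℝ × ℝ) (ρ : ℝ) : Set (ℝ × ℝ) :=
  {q : ℝ × ℝ | 0 < q.1 ∧
    ‖((Real.log (q.1 / p.1) : ℂ) + Complex.I * ((q.2 - p.2 : ℝ) : ℂ))‖ < ρ}

/-- The polar contour integral along the positively oriented boundary of
`[a,b] × [α,β]`:  `∮ g(r,θ) e^{iθ} (dr + i r dθ)`. -/
def rectPolarIntegral (a b α β : ℝ) (g : ℝ × ℝ → ℂ) : ℂ :=
  (∫ r in a..b, g (r, α) * Complex.exp (Complex.I * (α : ℂ))) +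
  (∫ θ in α..β, g (b, θ) * Complex.I * (b : ℂ) * Complex.exp (Complex.I * (θ : ℂ))) -
  (∫ r in a..b, g (r, β) * Complex.exp (Complex.I * (β : ℂ))) -
  (∫ θ in α..β, g (a, θ) * Complex.I * (a : ℂ) * Complex.exp (Complex.I * (θ : ℂ)))

/-- `(r₀,θ₀)` is a logarithmic pole of order `k` of `f`, witnessed by the
neighborhood `U₀` and the polar-analytic function `g`. -/
def IsLogPole (f : ℝ × ℝ → ℂ) (p : ℝ × ℝ) (k : ℕ) (U₀ : Set (ℝ × ℝ))
    (g : ℝ × ℝ → ℂ) : Prop :=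
  IsOpen U₀ ∧ p ∈ U₀ ∧ U₀ ⊆ polarHalfPlane ∧ 1 ≤ k ∧
  PolarAnalyticOn f (U₀ \ {p}) ∧ PolarAnalyticOn g U₀ ∧ g p ≠ 0 ∧
  ∀ q ∈ U₀ \ {p},
    f q = g q / ((Real.log (q.1 / p.1) : ℂ) + Complex.I * ((q.2 - p.2 : ℝ) : ℂ)) ^ k

/-- The `c`-residue of a logarithmic pole of order `k` with witness `g`. -/
def cResidue (c : ℝ) (p : ℝ × ℝ) (k : ℕ) (g : ℝ × ℝ → ℂ) : ℂ :=
  ((p.1 ^ c : ℝ) : ℂ) * Complex.exp (Complex.I * (c : ℂ) * (p.2 : ℂ)) *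
    ((mellinPolarDeriv c)^[k - 1] g p) / ((k - 1).factorial : ℂ)

/-- The central Mellin difference `δ_{c,t} f`. -/
def centralMellinDiff (c t : ℝ) (f : ℝ × ℝ → ℂ) : ℝ × ℝ → ℂ :=
  fun q => ((t ^ c : ℝ) : ℂ) * f (t * q.1, q.2) - ((t ^ (-c) : ℝ) : ℂ) * f (t⁻¹ * q.1, q.2)


-- auxiliary lemma: if f vanishes on an open set U, all iterated Mellin derivatives
-- vanish on U.
lemma iter_mellin_zero {f : ℝ × ℝ → ℂ} {U : Set (ℝ × ℝ)} (hU : IsOpen U)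
    (h : ∀ q ∈ U, f q = 0) :
    ∀ k : ℕ, ∀ p ∈ U, (mellinPolarDeriv 0)^[k] f p = 0 := by
  intro k
  induction k with
  | zero => simpa using h
  | succ n ih =>
    intro p hp
    rw [Function.iterate_succ_apply']
    have hev : ∀ᶠ r in nhds p.1, (r, p.2) ∈ U := by
      have hc : ContinuousAt (fun r : ℝ => (r, p.2)) p.1 := by fun_prop
      exact hc (hU.mem_nhds (by simpa using hp))
    have hEq : (fun r => (mellinPolarDeriv 0)^[n] f (r, p.2)) =ᶠ[nhds p.1]
        (fun _ => (0 : ℂ)) := by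
      filter_upwards [hev] with r hr using ih _ hr
    have hderiv : deriv (fun r => (mellinPolarDeriv 0)^[n] f (r, p.2)) p.1 = 0 := by
      rw [hEq.deriv_eq]; simp
    show (p.1 : ℂ) * deriv (fun r => (mellinPolarDeriv 0)^[n] f (r, p.2)) p.1 +
        ((0 : ℝ) : ℂ) * (mellinPolarDeriv 0)^[n] f p = 0
    rw [hderiv]; simp

/-- at an accumulation point of distinct zeros of a polar-analytic
function, all polar Mellin derivatives `Θ₀^k f` vanish. -/
theorem statement2 (D : Set (ℝ × ℝ)) (hD : IsOpen D) (hDH : D ⊆ polarHalfPlane)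
    (hconn : IsConnected D) (f : ℝ × ℝ → ℂ) (hf : PolarAnalyticOn f D)
    (p₀ : ℝ × ℝ) (hp₀ : p₀ ∈ D) (z : ℕ → ℝ × ℝ) (hzD : ∀ n, z n ∈ D)
    (hzero : ∀ n, f (z n) = 0) (hne : ∀ n, z n ≠ p₀)
    (hlim : Tendsto z atTop (nhds p₀)) :
    ∀ k : ℕ, (mellinPolarDeriv 0)^[k] f p₀ = 0 := by
  have hr₀ : 0 < p₀.1 := hDH hp₀
  set e : ℝ × ℝ → ℂ := fun q => (q.1 : ℂ) * Complex.exp (Complex.I * (q.2 : ℂ)) with he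
  set ψ : ℂ → ℝ × ℝ :=
    fun w => (‖w‖,
      p₀.2 + Complex.arg (w * Complex.exp (-(Complex.I * (p₀.2 : ℂ))))) with hψ
  have key1 : ∀ w : ℂ, w ≠ 0 → e (ψ w) = w := by
    intro w hw
    have h1 : ‖w * Complex.exp (-(Complex.I * (p₀.2 : ℂ)))‖ = ‖w‖ := by
      rw [norm_mul, Complex.norm_exp]
      simp
    have h2 : ((‖w * Complex.exp (-(Complex.I * (p₀.2 : ℂ)))‖ : ℝ) : ℂ) *
        Complex.exp ((Complex.arg (w * Complex.exp (-(Complex.I * (p₀.2 : ℂ)))) : ℂ) * Complex.I)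
        = w * Complex.exp (-(Complex.I * (p₀.2 : ℂ))) :=
      Complex.norm_mul_exp_arg_mul_I _
    show ((‖w‖ : ℝ) : ℂ) * Complex.exp (Complex.I *
        ((p₀.2 + Complex.arg (w * Complex.exp (-(Complex.I * (p₀.2 : ℂ))))) : ℝ)) = w
    rw [Complex.ofReal_add, mul_add, Complex.exp_add, ← h1]
    rw [show Complex.I * (Complex.arg (w * Complex.exp (-(Complex.I * (p₀.2 : ℂ)))) : ℂ)
        = (Complex.arg (w * Complex.exp (-(Complex.I * (p₀.2 : ℂ)))) : ℂ) * Complex.I by ring]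
    rw [show ((‖w * Complex.exp (-(Complex.I * (p₀.2 : ℂ)))‖ : ℝ) : ℂ) *
        (Complex.exp (Complex.I * (p₀.2 : ℂ)) *
          Complex.exp ((Complex.arg (w * Complex.exp (-(Complex.I * (p₀.2 : ℂ)))) : ℂ) * Complex.I))
        = (((‖w * Complex.exp (-(Complex.I * (p₀.2 : ℂ)))‖ : ℝ) : ℂ) *
            Complex.exp ((Complex.arg (w * Complex.exp (-(Complex.I * (p₀.2 : ℂ)))) : ℂ) * Complex.I)) *
          Complex.exp (Complex.I * (p₀.2 : ℂ)) by ring]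
    rw [h2]
    rw [mul_assoc, ← Complex.exp_add]
    simp
  have key2 : ∀ q : ℝ × ℝ, 0 < q.1 → |q.2 - p₀.2| < Real.pi → ψ (e q) = q := by
    intro q hq1 hq2
    have hprod : e q * Complex.exp (-(Complex.I * (p₀.2 : ℂ)))
        = (q.1 : ℂ) * Complex.exp (((q.2 - p₀.2 : ℝ) : ℂ) * Complex.I) := by
      rw [he]
      simp only
      rw [mul_assoc, ← Complex.exp_add]
      push_cast
      ring_nf
    have habs : ‖e q‖ = q.1 := by
      rw [he]; simp only [norm_mul, Complex.norm_exp]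
      simp [abs_of_pos hq1]
    have harg : Complex.arg (e q * Complex.exp (-(Complex.I * (p₀.2 : ℂ)))) = q.2 - p₀.2 := by
      rw [hprod]
      rw [Complex.arg_real_mul _ hq1]
      rw [Complex.exp_mul_I]
      exact Complex.arg_cos_add_sin_mul_I ⟨neg_lt_of_abs_lt hq2, le_of_abs_le hq2.le⟩
    rw [hψ]
    simp only
    rw [habs, harg]
    simp
  -- the open set S where ψ is continuous
  set S : Set ℂ := {w : ℂ | 0 < (w * Complex.exp (-(Complex.I * (p₀.2 : ℂ)))).re} with hS
  have hSopen : IsOpen S := by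
    have : Continuous fun w : ℂ => (w * Complex.exp (-(Complex.I * (p₀.2 : ℂ)))).re := by
      fun_prop
    exact isOpen_lt continuous_const this
  have h0S : ∀ w ∈ S, w ≠ 0 := by
    intro w hw hw0
    rw [hS] at hw
    simp [hw0] at hw
  have hψcont : ∀ w ∈ S, ContinuousAt ψ w := by
    intro w hw
    have harg : ContinuousAt (fun w : ℂ =>
        Complex.arg (w * Complex.exp (-(Complex.I * (p₀.2 : ℂ))))) w := by
      have hmul : ContinuousAt (fun w : ℂ => w * Complex.exp (-(Complex.I * (p₀.2 : ℂ)))) w := by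
        fun_prop
      exact ContinuousAt.comp (g := Complex.arg)
        (Complex.continuousAt_arg (Complex.mem_slitPlane_iff.2 (Or.inl hw))) hmul
    exact ContinuousAt.prodMk (continuous_norm.continuousAt) (continuousAt_const.add harg)
  set w₀ : ℂ := e p₀ with hw₀
  have hw₀S : w₀ ∈ S := by
    rw [hS, hw₀, he]
    simp only [Set.mem_setOf_eq, mul_assoc, ← Complex.exp_add]
    simp [hr₀]
  have hψw₀ : ψ w₀ = p₀ := key2 p₀ hr₀ (by simpa using Real.pi_pos)
  -- small ball B' around p₀ inside D with angle control
  obtain ⟨δ₁, hδ₁, hballD⟩ := Metric.isOpen_iff.1 hD p₀ hp₀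
  set δ : ℝ := min δ₁ (Real.pi / 2) with hδdef
  have hδpos : 0 < δ := lt_min hδ₁ (by positivity)
  set B' : Set (ℝ × ℝ) := Metric.ball p₀ δ with hB'
  have hB'D : B' ⊆ D := fun q hq => hballD (Metric.ball_subset_ball (min_le_left _ _) hq)
  have hB'angle : ∀ q ∈ B', |q.2 - p₀.2| < Real.pi := by
    intro q hq
    have h1 : dist q.2 p₀.2 ≤ dist q p₀ := by
      rw [Prod.dist_eq]; exact le_max_right _ _
    have h2 : dist q p₀ < δ := hq
    have := lt_of_le_of_lt h1 h2
    rw [Real.dist_eq] at this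
    calc |q.2 - p₀.2| < δ := this
      _ ≤ Real.pi / 2 := min_le_right _ _
      _ < Real.pi := by linarith [Real.pi_pos]
  have hp₀B' : p₀ ∈ B' := Metric.mem_ball_self hδpos
  -- the open set U ⊆ ℂ
  set U : Set ℂ := S ∩ ψ ⁻¹' B' with hU
  have hUopen : IsOpen U :=
    ContinuousOn.isOpen_inter_preimage (fun w hw => (hψcont w hw).continuousWithinAt)
      hSopen Metric.isOpen_ball
  have hw₀U : w₀ ∈ U := ⟨hw₀S, by simp [hψw₀, hp₀B']⟩
  -- F is differentiable on U
  set F : ℂ → ℂ := f ∘ ψ with hF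
  have hFdiff : ∀ w ∈ U, DifferentiableAt ℂ F w := by
    intro w hw
    have hpD : ψ w ∈ D := hB'D hw.2
    obtain ⟨L, hL⟩ := hf (ψ w) hpD
    refine (HasDerivAt.differentiableAt (f' := L) ?_)
    rw [hasDerivAt_iff_tendsto_slope]
    -- ψ tends to ψ w within D \ {ψ w}
    have hev : ∀ᶠ u in nhdsWithin w {w}ᶜ, ψ u ∈ D \ {ψ w} := by
      have hUmem : ∀ᶠ u in nhdsWithin w {w}ᶜ, u ∈ U :=
        eventually_nhdsWithin_of_eventually_nhds (hUopen.eventually_mem hw)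
      filter_upwards [hUmem, self_mem_nhdsWithin] with u huU hune
      refine ⟨hB'D huU.2, ?_⟩
      intro hcontra
      apply hune
      have : e (ψ u) = e (ψ w) := by rw [Set.mem_singleton_iff.1 hcontra]
      rw [key1 u (h0S u huU.1), key1 w (h0S w hw.1)] at this
      exact this
    have hψtend : Tendsto ψ (nhdsWithin w {w}ᶜ) (nhdsWithin (ψ w) (D \ {ψ w})) :=
      tendsto_nhdsWithin_of_tendsto_nhds_of_eventually_within _
        (((hψcont w hw.1).tendsto).mono_left nhdsWithin_le_nhds) hev
    have hcomp := hL.comp hψtend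
    refine hcomp.congr' ?_
    have hUmem : ∀ᶠ u in nhdsWithin w {w}ᶜ, u ∈ U :=
      eventually_nhdsWithin_of_eventually_nhds (hUopen.eventually_mem hw)
    filter_upwards [hUmem, self_mem_nhdsWithin] with u huU hune
    show (f (ψ u) - f (ψ w)) /
        ((ψ u).1 * Complex.exp (Complex.I * ((ψ u).2 : ℂ)) -
         (ψ w).1 * Complex.exp (Complex.I * ((ψ w).2 : ℂ))) = slope F w u
    rw [slope_def_field]
    have h1 : ((ψ u).1 : ℂ) * Complex.exp (Complex.I * ((ψ u).2 : ℂ)) = u :=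
      key1 u (h0S u huU.1)
    have h2 : ((ψ w).1 : ℂ) * Complex.exp (Complex.I * ((ψ w).2 : ℂ)) = w :=
      key1 w (h0S w hw.1)
    rw [h1, h2]
    rfl
  -- analytic on a ball inside U
  obtain ⟨ε, hεpos, hballU⟩ := Metric.isOpen_iff.1 hUopen w₀ hw₀U
  have hFanal : AnalyticOnNhd ℂ F (Metric.ball w₀ ε) :=
    (DifferentiableOn.analyticOnNhd
      (fun u hu => (hFdiff u (hballU hu)).differentiableWithinAt) Metric.isOpen_ball)
  -- the sequence of zeros maps to zeros of F accumulating at w₀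
  have hecont : Continuous e := by rw [he]; fun_prop
  set B'' : Set (ℝ × ℝ) := B' ∩ e ⁻¹' Metric.ball w₀ ε with hB''
  have hB''open : IsOpen B'' :=
    Metric.isOpen_ball.inter (Metric.isOpen_ball.preimage hecont)
  have hp₀B'' : p₀ ∈ B'' := ⟨hp₀B', by simp [Metric.mem_ball_self hεpos, hw₀]⟩
  have hzev : ∀ᶠ n in atTop, z n ∈ B'' := hlim.eventually (hB''open.eventually_mem hp₀B'')
  have heztend : Tendsto (fun n => e (z n)) atTop (nhdsWithin w₀ {w₀}ᶜ) := by
    apply tendsto_nhdsWithin_of_tendsto_nhds_of_eventually_within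
    · exact (hecont.tendsto p₀).comp hlim
    · filter_upwards [hzev] with n hn
      intro hcontra
      apply hne n
      have hq1 : 0 < (z n).1 := hDH (hzD n)
      have := key2 (z n) hq1 (hB'angle _ hn.1)
      rw [Set.mem_singleton_iff] at hcontra
      rw [hcontra, hψw₀] at this
      exact this.symm
  have hfreq : ∃ᶠ u in nhdsWithin w₀ {w₀}ᶜ, F u = 0 := by
    apply heztend.frequently
    apply Filter.Eventually.frequently
    filter_upwards [hzev] with n hn
    have hq1 : 0 < (z n).1 := hDH (hzD n)
    show f (ψ (e (z n))) = 0
    rw [key2 (z n) hq1 (hB'angle _ hn.1)]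
    exact hzero n
  have hF0 : Set.EqOn F 0 (Metric.ball w₀ ε) :=
    hFanal.eqOn_zero_of_preconnected_of_frequently_eq_zero
      (convex_ball w₀ ε).isPreconnected (Metric.mem_ball_self hεpos) hfreq
  -- f vanishes on B''
  have hfzero : ∀ q ∈ B'', f q = 0 := by
    intro q hq
    have hq1 : 0 < q.1 := hDH (hB'D hq.1)
    have h1 : F (e q) = 0 := hF0 hq.2
    have h2 : ψ (e q) = q := key2 q hq1 (hB'angle _ hq.1)
    show f q = 0
    rw [← h2]
    exact h1
  intro k
  exact iter_mellin_zero hB''open hfzero k p₀ hp₀B''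


end
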